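/- Let V be a real inner product space of finite dimension n ≥ 4 and let R be an algebraic curvature tensor on V. Suppose that for every orthonormal four-frame {f₁,f₂,f₃,f₄} in V one has R(f₁,f₃,f₁,f₃) + R(f₁,f₄,f₁,f₄) + R(f₂,f₃,f₂,f₃) + R(f₂,f₄,f₂,f₄) > (1/2)·(R(f₁,f₂,f₁,f₂) + R(f₃,f₄,f₃,f₄)). Then for every orthonormal four-frame {e₁,e₂,e₃,e₄} in V one has 4·(R(e₁,e₄,e₁,e₄) + R(e₂,e₃,e₂,e₃)) + 6·R(e₁,e₂,e₄,e₃) + 6·R(e₁,e₃,e₄,e₂) + R(e₁,e₂,e₁,e₂) + R(e₁,e₃,e₁,e₃) + R(e₂,e₄,e₂,e₄) + R(e₃,e₄,e₃,e₄) > 0. -/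

import Mathlib

open scoped RealInnerProductSpace

variable {V : Type*} [NormedAddCommGroup V] [InnerProductSpace ℝ V]

/-- An algebraic curvature tensor on a real inner product space `V`:
an `ℝ`-multilinear map `V × V × V × V → ℝ` with the standard symmetries and
the first Bianchi identity. -/
def IsCurvatureTensor (R : V →ₗ[ℝ] V →ₗ[ℝ] V →ₗ[ℝ] V →ₗ[ℝ] ℝ) : Prop :=
  (∀ X Y Z W : V, R X Y Z W = - R Y X Z W) ∧
  (∀ X Y Z W : V, R X Y Z W = - R X Y W Z) ∧
  (∀ X Y Z W : V, R X Y Z W = R Z W X Y) ∧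
  (∀ X Y Z W : V, R X Y Z W + R X Z W Y + R X W Y Z = 0)

/-- An orthonormal four-frame: four pairwise orthogonal unit vectors. -/
def OrthonormalFrame4 (e₁ e₂ e₃ e₄ : V) : Prop :=
  ‖e₁‖ = 1 ∧ ‖e₂‖ = 1 ∧ ‖e₃‖ = 1 ∧ ‖e₄‖ = 1 ∧
  ⟪e₁, e₂⟫ = 0 ∧ ⟪e₁, e₃⟫ = 0 ∧ ⟪e₁, e₄⟫ = 0 ∧
  ⟪e₂, e₃⟫ = 0 ∧ ⟪e₂, e₄⟫ = 0 ∧ ⟪e₃, e₄⟫ = 0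

set_option maxHeartbeats 2000000 in
theorem stmt_18 {V : Type*} [NormedAddCommGroup V] [InnerProductSpace ℝ V]
    [FiniteDimensional ℝ V] (hdim : 4 ≤ Module.finrank ℝ V)
    (R : V →ₗ[ℝ] V →ₗ[ℝ] V →ₗ[ℝ] V →ₗ[ℝ] ℝ) (hR : IsCurvatureTensor R)
    (hyp : ∀ f₁ f₂ f₃ f₄ : V, OrthonormalFrame4 f₁ f₂ f₃ f₄ →
      R f₁ f₃ f₁ f₃ + R f₁ f₄ f₁ f₄ + R f₂ f₃ f₂ f₃ + R f₂ f₄ f₂ f₄ >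
        (1 / 2) * (R f₁ f₂ f₁ f₂ + R f₃ f₄ f₃ f₄)) :
    ∀ e₁ e₂ e₃ e₄ : V, OrthonormalFrame4 e₁ e₂ e₃ e₄ →
      4 * (R e₁ e₄ e₁ e₄ + R e₂ e₃ e₂ e₃)
        + 6 * R e₁ e₂ e₄ e₃ + 6 * R e₁ e₃ e₄ e₂
        + R e₁ e₂ e₁ e₂ + R e₁ e₃ e₁ e₃ + R e₂ e₄ e₂ e₄ + R e₃ e₄ e₃ e₄ > 0 := by
  obtain ⟨ha, hb, hc, hd⟩ := hR
  intro e₁ e₂ e₃ e₄ he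
  obtain ⟨h1, h2, h3, h4, h12, h13, h14, h23, h24, h34⟩ := he
  set c : ℝ := (Real.sqrt 2)⁻¹ with hcdef
  have hc2 : c * c = 1 / 2 := by
    rw [hcdef, ← mul_inv, Real.mul_self_sqrt (by norm_num : (0:ℝ) ≤ 2)]
    norm_num
  have hcpos : 0 ≤ c := by rw [hcdef]; positivity
  have h11 : ⟪e₁, e₁⟫ = (1:ℝ) := by
    rw [real_inner_self_eq_norm_sq, h1]; norm_num
  have h22 : ⟪e₂, e₂⟫ = (1:ℝ) := by
    rw [real_inner_self_eq_norm_sq, h2]; norm_num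
  have h33 : ⟪e₃, e₃⟫ = (1:ℝ) := by
    rw [real_inner_self_eq_norm_sq, h3]; norm_num
  have h44 : ⟪e₄, e₄⟫ = (1:ℝ) := by
    rw [real_inner_self_eq_norm_sq, h4]; norm_num
  have h21 : ⟪e₂, e₁⟫ = (0:ℝ) := by rw [real_inner_comm]; exact h12
  have h31 : ⟪e₃, e₁⟫ = (0:ℝ) := by rw [real_inner_comm]; exact h13
  have h41 : ⟪e₄, e₁⟫ = (0:ℝ) := by rw [real_inner_comm]; exact h14
  have h32 : ⟪e₃, e₂⟫ = (0:ℝ) := by rw [real_inner_comm]; exact h23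
  have h42 : ⟪e₄, e₂⟫ = (0:ℝ) := by rw [real_inner_comm]; exact h24
  have h43 : ⟪e₄, e₃⟫ = (0:ℝ) := by rw [real_inner_comm]; exact h34
  have hn : ∀ x y : V, ‖x‖ = 1 → ‖y‖ = 1 → ⟪x, y⟫ = (0:ℝ) →
      ‖c • (x + y)‖ = 1 := by
    intro x y hx hy hxy
    have hsq : ‖x + y‖ ^ 2 = 2 := by
      rw [norm_add_sq_real, hx, hy, hxy]; ring
    have hone : ‖c • (x + y)‖ ^ 2 = 1 := by
      rw [norm_smul, mul_pow, Real.norm_eq_abs, sq_abs, hsq, sq, hc2]; ring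
    nlinarith [norm_nonneg (c • (x + y))]
  have hns : ∀ x y : V, ‖x‖ = 1 → ‖y‖ = 1 → ⟪x, y⟫ = (0:ℝ) →
      ‖c • (x - y)‖ = 1 := by
    intro x y hx hy hxy
    rw [sub_eq_add_neg]
    exact hn x (-y) hx (by rw [norm_neg]; exact hy)
      (by rw [inner_neg_right, hxy]; ring)
  have hf : OrthonormalFrame4 (c • (e₁ + e₄)) (c • (e₂ - e₃))
      (c • (e₁ - e₄)) (c • (e₂ + e₃)) := by
    refine ⟨hn e₁ e₄ h1 h4 h14, hns e₂ e₃ h2 h3 h23,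
      hns e₁ e₄ h1 h4 h14, hn e₂ e₃ h2 h3 h23, ?_, ?_, ?_, ?_, ?_, ?_⟩ <;>
      simp only [inner_add_left, inner_add_right, inner_sub_left, inner_sub_right,
        real_inner_smul_left, real_inner_smul_right,
        h11, h22, h33, h44, h12, h13, h14, h23, h24, h34,
        h21, h31, h41, h32, h42, h43] <;> ring
  have key := hyp _ _ _ _ hf
  have sm : ∀ a b : V, R (c • a) (c • b) (c • a) (c • b)
      = (1 / 4) * R a b a b := by
    intro a b
    simp only [map_smul, LinearMap.smul_apply, smul_eq_mul]
    have h4' : c * (c * (c * (c * R a b a b)))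
        = (c * c) * ((c * c) * R a b a b) := by ring
    rw [h4', hc2]; ring
  rw [sm, sm, sm, sm, sm, sm] at key
  simp only [map_add, map_sub, LinearMap.add_apply, LinearMap.sub_apply] at key
  have hs : ∀ x y a b d : V, R (x - y) a b d = R x a b d - R y a b d := by
    intro x y a b d
    rw [sub_eq_add_neg, ← neg_one_smul ℝ y]
    simp only [map_add, map_smul, LinearMap.add_apply, LinearMap.smul_apply, smul_eq_mul]; ring
  simp only [hs] at key
  have hT1111 : R e₁ e₁ e₁ e₁ = 0 := by have := ha e₁ e₁ e₁ e₁; linarith only [this]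
  have hT1114 : R e₁ e₁ e₁ e₄ = 0 := by have := ha e₁ e₁ e₁ e₄; linarith only [this]
  have hT1141 : R e₁ e₁ e₄ e₁ = 0 := by have := ha e₁ e₁ e₄ e₁; linarith only [this]
  have hT1144 : R e₁ e₁ e₄ e₄ = 0 := by have := ha e₁ e₁ e₄ e₄; linarith only [this]
  have hT1242 : R e₁ e₂ e₄ e₂ = -(R e₁ e₂ e₂ e₄) := by linarith only [ha e₁ e₂ e₄ e₂, hb e₁ e₂ e₄ e₂, hc e₁ e₂ e₂ e₄]
  have hT1243 : R e₁ e₂ e₄ e₃ = -(R e₁ e₂ e₃ e₄) := by linarith only [ha e₁ e₂ e₄ e₃, hb e₁ e₂ e₄ e₃, hc e₁ e₂ e₃ e₄]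
  have hT1312 : R e₁ e₃ e₁ e₂ = R e₁ e₂ e₁ e₃ := by linarith only [ha e₁ e₃ e₁ e₂, hb e₁ e₃ e₁ e₂, hc e₁ e₃ e₁ e₂]
  have hT1342 : R e₁ e₃ e₄ e₂ = -(R e₁ e₃ e₂ e₄) := by linarith only [ha e₁ e₃ e₄ e₂, hb e₁ e₃ e₄ e₂, hc e₁ e₃ e₂ e₄]
  have hT1343 : R e₁ e₃ e₄ e₃ = -(R e₁ e₃ e₃ e₄) := by linarith only [ha e₁ e₃ e₄ e₃, hb e₁ e₃ e₄ e₃, hc e₁ e₃ e₃ e₄]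
  have hT1411 : R e₁ e₄ e₁ e₁ = 0 := by have := hb e₁ e₄ e₁ e₁; linarith only [this]
  have hT1441 : R e₁ e₄ e₄ e₁ = -(R e₁ e₄ e₁ e₄) := by linarith only [ha e₁ e₄ e₄ e₁, hb e₁ e₄ e₄ e₁, hc e₁ e₄ e₁ e₄]
  have hT1444 : R e₁ e₄ e₄ e₄ = 0 := by have := hb e₁ e₄ e₄ e₄; linarith only [this]
  have hT2121 : R e₂ e₁ e₂ e₁ = R e₁ e₂ e₁ e₂ := by linarith only [ha e₂ e₁ e₂ e₁, hb e₁ e₂ e₂ e₁, hc e₁ e₂ e₁ e₂]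
  have hT2124 : R e₂ e₁ e₂ e₄ = -(R e₁ e₂ e₂ e₄) := by linarith only [ha e₂ e₁ e₂ e₄, hb e₁ e₂ e₂ e₄, hc e₁ e₂ e₂ e₄]
  have hT2131 : R e₂ e₁ e₃ e₁ = R e₁ e₂ e₁ e₃ := by linarith only [ha e₂ e₁ e₃ e₁, hb e₁ e₂ e₃ e₁, hc e₁ e₂ e₁ e₃]
  have hT2134 : R e₂ e₁ e₃ e₄ = -(R e₁ e₂ e₃ e₄) := by linarith only [ha e₂ e₁ e₃ e₄, hb e₁ e₂ e₃ e₄, hc e₁ e₂ e₃ e₄]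
  have hT2222 : R e₂ e₂ e₂ e₂ = 0 := by have := ha e₂ e₂ e₂ e₂; linarith only [this]
  have hT2223 : R e₂ e₂ e₂ e₃ = 0 := by have := ha e₂ e₂ e₂ e₃; linarith only [this]
  have hT2232 : R e₂ e₂ e₃ e₂ = 0 := by have := ha e₂ e₂ e₃ e₂; linarith only [this]
  have hT2233 : R e₂ e₂ e₃ e₃ = 0 := by have := ha e₂ e₂ e₃ e₃; linarith only [this]
  have hT2322 : R e₂ e₃ e₂ e₂ = 0 := by have := hb e₂ e₃ e₂ e₂; linarith only [this]
  have hT2332 : R e₂ e₃ e₃ e₂ = -(R e₂ e₃ e₂ e₃) := by linarith only [ha e₂ e₃ e₃ e₂, hb e₂ e₃ e₃ e₂, hc e₂ e₃ e₂ e₃]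
  have hT2333 : R e₂ e₃ e₃ e₃ = 0 := by have := hb e₂ e₃ e₃ e₃; linarith only [this]
  have hT2421 : R e₂ e₄ e₂ e₁ = -(R e₁ e₂ e₂ e₄) := by linarith only [ha e₂ e₄ e₂ e₁, hb e₂ e₄ e₂ e₁, hc e₂ e₄ e₁ e₂]
  have hT2431 : R e₂ e₄ e₃ e₁ = -(R e₁ e₃ e₂ e₄) := by linarith only [ha e₂ e₄ e₃ e₁, hb e₂ e₄ e₃ e₁, hc e₂ e₄ e₁ e₃]
  have hT3121 : R e₃ e₁ e₂ e₁ = R e₁ e₂ e₁ e₃ := by linarith only [ha e₃ e₁ e₂ e₁, hb e₁ e₃ e₂ e₁, hc e₁ e₃ e₁ e₂]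
  have hT3124 : R e₃ e₁ e₂ e₄ = -(R e₁ e₃ e₂ e₄) := by linarith only [ha e₃ e₁ e₂ e₄, hb e₁ e₃ e₂ e₄, hc e₁ e₃ e₂ e₄]
  have hT3131 : R e₃ e₁ e₃ e₁ = R e₁ e₃ e₁ e₃ := by linarith only [ha e₃ e₁ e₃ e₁, hb e₁ e₃ e₃ e₁, hc e₁ e₃ e₁ e₃]
  have hT3134 : R e₃ e₁ e₃ e₄ = -(R e₁ e₃ e₃ e₄) := by linarith only [ha e₃ e₁ e₃ e₄, hb e₁ e₃ e₃ e₄, hc e₁ e₃ e₃ e₄]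
  have hT3222 : R e₃ e₂ e₂ e₂ = 0 := by have := hb e₃ e₂ e₂ e₂; linarith only [this]
  have hT3223 : R e₃ e₂ e₂ e₃ = -(R e₂ e₃ e₂ e₃) := by linarith only [ha e₃ e₂ e₂ e₃, hb e₂ e₃ e₂ e₃, hc e₂ e₃ e₂ e₃]
  have hT3232 : R e₃ e₂ e₃ e₂ = R e₂ e₃ e₂ e₃ := by linarith only [ha e₃ e₂ e₃ e₂, hb e₂ e₃ e₃ e₂, hc e₂ e₃ e₂ e₃]
  have hT3233 : R e₃ e₂ e₃ e₃ = 0 := by have := hb e₃ e₂ e₃ e₃; linarith only [this]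
  have hT3322 : R e₃ e₃ e₂ e₂ = 0 := by have := ha e₃ e₃ e₂ e₂; linarith only [this]
  have hT3323 : R e₃ e₃ e₂ e₃ = 0 := by have := ha e₃ e₃ e₂ e₃; linarith only [this]
  have hT3332 : R e₃ e₃ e₃ e₂ = 0 := by have := ha e₃ e₃ e₃ e₂; linarith only [this]
  have hT3333 : R e₃ e₃ e₃ e₃ = 0 := by have := ha e₃ e₃ e₃ e₃; linarith only [this]
  have hT3421 : R e₃ e₄ e₂ e₁ = -(R e₁ e₂ e₃ e₄) := by linarith only [ha e₃ e₄ e₂ e₁, hb e₃ e₄ e₂ e₁, hc e₃ e₄ e₁ e₂]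
  have hT3424 : R e₃ e₄ e₂ e₄ = R e₂ e₄ e₃ e₄ := by linarith only [ha e₃ e₄ e₂ e₄, hb e₃ e₄ e₂ e₄, hc e₃ e₄ e₂ e₄]
  have hT3431 : R e₃ e₄ e₃ e₁ = -(R e₁ e₃ e₃ e₄) := by linarith only [ha e₃ e₄ e₃ e₁, hb e₃ e₄ e₃ e₁, hc e₃ e₄ e₁ e₃]
  have hT4111 : R e₄ e₁ e₁ e₁ = 0 := by have := hb e₄ e₁ e₁ e₁; linarith only [this]
  have hT4114 : R e₄ e₁ e₁ e₄ = -(R e₁ e₄ e₁ e₄) := by linarith only [ha e₄ e₁ e₁ e₄, hb e₁ e₄ e₁ e₄, hc e₁ e₄ e₁ e₄]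
  have hT4141 : R e₄ e₁ e₄ e₁ = R e₁ e₄ e₁ e₄ := by linarith only [ha e₄ e₁ e₄ e₁, hb e₁ e₄ e₄ e₁, hc e₁ e₄ e₁ e₄]
  have hT4144 : R e₄ e₁ e₄ e₄ = 0 := by have := hb e₄ e₁ e₄ e₄; linarith only [this]
  have hT4212 : R e₄ e₂ e₁ e₂ = -(R e₁ e₂ e₂ e₄) := by linarith only [ha e₄ e₂ e₁ e₂, hb e₂ e₄ e₁ e₂, hc e₂ e₄ e₁ e₂]
  have hT4213 : R e₄ e₂ e₁ e₃ = -(R e₁ e₃ e₂ e₄) := by linarith only [ha e₄ e₂ e₁ e₃, hb e₂ e₄ e₁ e₃, hc e₂ e₄ e₁ e₃]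
  have hT4242 : R e₄ e₂ e₄ e₂ = R e₂ e₄ e₂ e₄ := by linarith only [ha e₄ e₂ e₄ e₂, hb e₂ e₄ e₄ e₂, hc e₂ e₄ e₂ e₄]
  have hT4243 : R e₄ e₂ e₄ e₃ = R e₂ e₄ e₃ e₄ := by linarith only [ha e₄ e₂ e₄ e₃, hb e₂ e₄ e₄ e₃, hc e₂ e₄ e₃ e₄]
  have hT4312 : R e₄ e₃ e₁ e₂ = -(R e₁ e₂ e₃ e₄) := by linarith only [ha e₄ e₃ e₁ e₂, hb e₃ e₄ e₁ e₂, hc e₃ e₄ e₁ e₂]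
  have hT4313 : R e₄ e₃ e₁ e₃ = -(R e₁ e₃ e₃ e₄) := by linarith only [ha e₄ e₃ e₁ e₃, hb e₃ e₄ e₁ e₃, hc e₃ e₄ e₁ e₃]
  have hT4342 : R e₄ e₃ e₄ e₂ = R e₂ e₄ e₃ e₄ := by linarith only [ha e₄ e₃ e₄ e₂, hb e₃ e₄ e₄ e₂, hc e₃ e₄ e₂ e₄]
  have hT4343 : R e₄ e₃ e₄ e₃ = R e₃ e₄ e₃ e₄ := by linarith only [ha e₄ e₃ e₄ e₃, hb e₃ e₄ e₄ e₃, hc e₃ e₄ e₃ e₄]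
  have hT4411 : R e₄ e₄ e₁ e₁ = 0 := by have := ha e₄ e₄ e₁ e₁; linarith only [this]
  have hT4414 : R e₄ e₄ e₁ e₄ = 0 := by have := ha e₄ e₄ e₁ e₄; linarith only [this]
  have hT4441 : R e₄ e₄ e₄ e₁ = 0 := by have := ha e₄ e₄ e₄ e₁; linarith only [this]
  have hT4444 : R e₄ e₄ e₄ e₄ = 0 := by have := ha e₄ e₄ e₄ e₄; linarith only [this]
  simp only [hT1111, hT1114, hT1141, hT1144, hT1242, hT1243, hT1312, hT1342, hT1343, hT1411, hT1441, hT1444, hT2121, hT2124, hT2131, hT2134, hT2222, hT2223, hT2232, hT2233, hT2322, hT2332, hT2333, hT2421, hT2431, hT3121, hT3124, hT3131, hT3134, hT3222, hT3223, hT3232, hT3233, hT3322, hT3323, hT3332, hT3333, hT3421, hT3424, hT3431, hT4111, hT4114, hT4141, hT4144, hT4212, hT4213, hT4242, hT4243, hT4312, hT4313, hT4342, hT4343, hT4411, hT4414, hT4441, hT4444] at key ⊢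
  linarith only [key]
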